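/- arXiv:2209.05757 — 2 statements merged into one kernel-verified Lean document; each statement's English description precedes it below -/
import Mathlib

section
/- The Gini-index can be updated incrementally under cluster merges: if g_{j-1} is the Gini index of the cluster-size vector (c_1,...,c_{n-j+1}) with total sum n, and clusters of sizes c_{s_1} and c_{s_2} are merged, then the new Gini index g_j of the resulting size vector satisfies g_j = [(n-j)·n·g_{j-1} + Σ_{i} (|c_i - c_{s_1} - c_{s_2}| - |c_i - c_{s_1}| - |c_i - c_{s_2}|) - c_{s_2} - c_{s_1} + |c_{s_1} - c_{s_2}|] / ((n-j-1)·n), where the sum ranges over all i = 1,...,n-j+1 (including s_1 and s_2). -/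
open Finset

/-- The Gini index of a length-`k` cluster-size vector `v`, with the denominator
normalized by the fixed total number of objects `nt`: `g(v) = (Σ_{p<q}|v_p-v_q|)/((k-1)·nt)`. -/
noncomputable def giniN (k nt : ℕ) (v : Fin k → ℕ) : ℝ :=
  (∑ p : Fin k, ∑ q : Fin k, if p < q then |(v p : ℝ) - (v q : ℝ)| else 0) /
    (((k : ℝ) - 1) * (nt : ℝ))

/-- Incremental update of the Gini index under a cluster merge: if `c` (of length
`n-j+1`, positive entries summing to `n`) has Gini index `g_{j-1}` and clusters
`s₁ ≠ s₂` are merged (yielding `c'` of length `n-j`, consisting of the remaining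
entries together with `c s₁ + c s₂`), then the new Gini index `g_j` satisfies the
stated formula. -/
theorem gini_incremental_update (n j : ℕ) (hn : 2 ≤ n) (hj1 : 1 ≤ j) (hj2 : j ≤ n - 2)
    (c : Fin (n - j + 1) → ℕ) (hpos : ∀ i, 0 < c i) (hsum : (∑ i, c i) = n)
    (s₁ s₂ : Fin (n - j + 1)) (hne : s₁ ≠ s₂)
    (e : Fin (n - j - 1) → Fin (n - j + 1)) (he : Function.Injective e)
    (hrange : ∀ i, e i ≠ s₁ ∧ e i ≠ s₂)
    (c' : Fin (n - j) → ℕ)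
    (hc' : ∀ k : Fin (n - j),
      c' k = if h : k.1 < n - j - 1 then c (e ⟨k.1, h⟩) else c s₁ + c s₂) :
    giniN (n - j) n c' =
      (((n : ℝ) - (j : ℝ)) * (n : ℝ) * giniN (n - j + 1) n c
        + (∑ i : Fin (n - j + 1),
            (|(c i : ℝ) - (c s₁ : ℝ) - (c s₂ : ℝ)|
              - |(c i : ℝ) - (c s₁ : ℝ)| - |(c i : ℝ) - (c s₂ : ℝ)|))
        - (c s₂ : ℝ) - (c s₁ : ℝ) + |(c s₁ : ℝ) - (c s₂ : ℝ)|) /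
      (((n : ℝ) - (j : ℝ) - 1) * (n : ℝ)) := by
  have hjn : j ≤ n := by omega
  have hK : 2 ≤ n - j := by omega
  classical
  set A : Finset (Fin (n - j + 1)) := Finset.univ \ {s₁, s₂} with hA
  -- splitting a sum over all indices into A plus the two merged indices
  have L1 : ∀ hh : Fin (n - j + 1) → ℝ,
      (∑ i, hh i) = (∑ i ∈ A, hh i) + hh s₁ + hh s₂ := by
    intro hh
    have h0 := Finset.sum_sdiff (f := hh)
      (Finset.subset_univ ({s₁, s₂} : Finset (Fin (n - j + 1))))
    rw [Finset.sum_pair hne] at h0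
    rw [hA]
    linarith
  have himage : Finset.image e Finset.univ = A := by
    apply Finset.eq_of_subset_of_card_le
    · intro x hx
      simp only [Finset.mem_image, Finset.mem_univ, true_and] at hx
      obtain ⟨i, rfl⟩ := hx
      simp [hA, (hrange i).1, (hrange i).2]
    · rw [Finset.card_image_of_injective _ he]
      have h1 : A.card = n - j + 1 - 2 := by
        rw [hA, Finset.card_sdiff_of_subset (Finset.subset_univ _), Finset.card_pair hne,
          Finset.card_univ, Fintype.card_fin]
      rw [h1, Finset.card_univ, Fintype.card_fin]
      omega
  -- sums over the merged vector
  have L2 : ∀ hh : ℕ → ℝ,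
      (∑ k : Fin (n - j), hh (c' k)) = (∑ i ∈ A, hh (c i)) + hh (c s₁ + c s₂) := by
    intro hh
    have hstep : (∑ k : Fin (n - j), hh (c' k)) =
        ∑ x ∈ Finset.range (n - j),
          (fun x => if h : x < n - j - 1 then hh (c (e ⟨x, h⟩)) else hh (c s₁ + c s₂)) x := by
      rw [← Fin.sum_univ_eq_sum_range]
      refine Finset.sum_congr rfl fun k _ => ?_
      rw [hc' k, apply_dite hh]
    rw [hstep]
    have h1 : Finset.range (n - j) = Finset.range ((n - j - 1) + 1) := by
      congr 1; omega
    rw [h1, Finset.sum_range_succ]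
    rw [dif_neg (lt_irrefl _)]
    congr 1
    rw [← himage, Finset.sum_image (fun p _ q _ hpq => he hpq),
      ← Fin.sum_univ_eq_sum_range]
    refine Finset.sum_congr rfl fun k _ => ?_
    rw [dif_pos k.2]
  -- doubling: the full double sum is twice the strictly-ordered one
  have hdouble : ∀ (k : ℕ) (v : Fin k → ℕ),
      (∑ p : Fin k, ∑ q : Fin k, |(v p : ℝ) - (v q : ℝ)|) =
      2 * (∑ p : Fin k, ∑ q : Fin k, if p < q then |(v p : ℝ) - (v q : ℝ)| else 0) := by
    intro k v
    have hterm : ∀ p q : Fin k, |(v p : ℝ) - (v q : ℝ)| =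
        (if p < q then |(v p : ℝ) - (v q : ℝ)| else 0)
        + (if q < p then |(v q : ℝ) - (v p : ℝ)| else 0) := by
      intro p q
      rcases lt_trichotomy p q with h | h | h
      · rw [if_pos h, if_neg (asymm h)]; ring
      · subst h; simp
      · rw [if_neg (asymm h), if_pos h, abs_sub_comm]; ring
    have hsw : (∑ p : Fin k, ∑ q : Fin k, if q < p then |(v q : ℝ) - (v p : ℝ)| else 0)
        = (∑ p : Fin k, ∑ q : Fin k, if p < q then |(v p : ℝ) - (v q : ℝ)| else 0) :=
      Finset.sum_comm
    calc (∑ p : Fin k, ∑ q : Fin k, |(v p : ℝ) - (v q : ℝ)|)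
        = ∑ p : Fin k, ∑ q : Fin k,
            ((if p < q then |(v p : ℝ) - (v q : ℝ)| else 0)
              + (if q < p then |(v q : ℝ) - (v p : ℝ)| else 0)) :=
          Finset.sum_congr rfl fun p _ => Finset.sum_congr rfl fun q _ => hterm p q
      _ = (∑ p : Fin k, ∑ q : Fin k, if p < q then |(v p : ℝ) - (v q : ℝ)| else 0)
          + (∑ p : Fin k, ∑ q : Fin k, if q < p then |(v q : ℝ) - (v p : ℝ)| else 0) := by
          simp [Finset.sum_add_distrib]
      _ = _ := by rw [hsw]; ring
  -- abbreviations (only informally); abs flips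
  have habsM : (∑ q ∈ A, |((c s₁ : ℝ) + (c s₂ : ℝ)) - (c q : ℝ)|)
      = ∑ i ∈ A, |(c i : ℝ) - ((c s₁ : ℝ) + (c s₂ : ℝ))| :=
    Finset.sum_congr rfl fun i _ => abs_sub_comm _ _
  have habs1 : (∑ q ∈ A, |(c s₁ : ℝ) - (c q : ℝ)|) = ∑ i ∈ A, |(c i : ℝ) - (c s₁ : ℝ)| :=
    Finset.sum_congr rfl fun i _ => abs_sub_comm _ _
  have habs2 : (∑ q ∈ A, |(c s₂ : ℝ) - (c q : ℝ)|) = ∑ i ∈ A, |(c i : ℝ) - (c s₂ : ℝ)| :=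
    Finset.sum_congr rfl fun i _ => abs_sub_comm _ _
  -- expansion of the new full double sum
  have e1 : (∑ p : Fin (n - j), ∑ q : Fin (n - j), |(c' p : ℝ) - (c' q : ℝ)|)
      = (∑ p ∈ A, ∑ q ∈ A, |(c p : ℝ) - (c q : ℝ)|)
        + 2 * (∑ i ∈ A, |(c i : ℝ) - ((c s₁ : ℝ) + (c s₂ : ℝ))|) := by
    have hcab : ((c s₁ + c s₂ : ℕ) : ℝ) = (c s₁ : ℝ) + (c s₂ : ℝ) := by push_cast; ring
    have step2 : ∀ x : ℕ, (∑ q : Fin (n - j), |(x : ℝ) - (c' q : ℝ)|)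
        = (∑ q ∈ A, |(x : ℝ) - (c q : ℝ)|) + |(x : ℝ) - ((c s₁ + c s₂ : ℕ) : ℝ)| :=
      fun x => L2 fun y => |(x : ℝ) - (y : ℝ)|
    calc (∑ p : Fin (n - j), ∑ q : Fin (n - j), |(c' p : ℝ) - (c' q : ℝ)|)
        = (∑ i ∈ A, ∑ q : Fin (n - j), |(c i : ℝ) - (c' q : ℝ)|)
          + ∑ q : Fin (n - j), |((c s₁ + c s₂ : ℕ) : ℝ) - (c' q : ℝ)| :=
          L2 fun x => ∑ q : Fin (n - j), |(x : ℝ) - (c' q : ℝ)|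
      _ = (∑ i ∈ A, ((∑ q ∈ A, |(c i : ℝ) - (c q : ℝ)|)
            + |(c i : ℝ) - ((c s₁ + c s₂ : ℕ) : ℝ)|))
          + ((∑ q ∈ A, |((c s₁ + c s₂ : ℕ) : ℝ) - (c q : ℝ)|)
            + |((c s₁ + c s₂ : ℕ) : ℝ) - ((c s₁ + c s₂ : ℕ) : ℝ)|) := by
          rw [Finset.sum_congr rfl (fun i _ => step2 (c i)), step2 (c s₁ + c s₂)]
      _ = _ := by
          rw [Finset.sum_add_distrib, sub_self, abs_zero, hcab, habsM]
          ring
  -- expansion of the old full double sum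
  have e2 : (∑ p : Fin (n - j + 1), ∑ q : Fin (n - j + 1), |(c p : ℝ) - (c q : ℝ)|)
      = (∑ p ∈ A, ∑ q ∈ A, |(c p : ℝ) - (c q : ℝ)|)
        + 2 * (∑ i ∈ A, |(c i : ℝ) - (c s₁ : ℝ)|)
        + 2 * (∑ i ∈ A, |(c i : ℝ) - (c s₂ : ℝ)|)
        + 2 * |(c s₁ : ℝ) - (c s₂ : ℝ)| := by
    have step2 : ∀ p : Fin (n - j + 1), (∑ q : Fin (n - j + 1), |(c p : ℝ) - (c q : ℝ)|)
        = (∑ q ∈ A, |(c p : ℝ) - (c q : ℝ)|) + |(c p : ℝ) - (c s₁ : ℝ)|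
          + |(c p : ℝ) - (c s₂ : ℝ)| :=
      fun p => L1 fun q => |(c p : ℝ) - (c q : ℝ)|
    calc (∑ p : Fin (n - j + 1), ∑ q : Fin (n - j + 1), |(c p : ℝ) - (c q : ℝ)|)
        = (∑ p ∈ A, ∑ q : Fin (n - j + 1), |(c p : ℝ) - (c q : ℝ)|)
          + (∑ q : Fin (n - j + 1), |(c s₁ : ℝ) - (c q : ℝ)|)
          + (∑ q : Fin (n - j + 1), |(c s₂ : ℝ) - (c q : ℝ)|) :=
          L1 fun p => ∑ q : Fin (n - j + 1), |(c p : ℝ) - (c q : ℝ)|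
      _ = (∑ p ∈ A, ((∑ q ∈ A, |(c p : ℝ) - (c q : ℝ)|) + |(c p : ℝ) - (c s₁ : ℝ)|
            + |(c p : ℝ) - (c s₂ : ℝ)|))
          + ((∑ q ∈ A, |(c s₁ : ℝ) - (c q : ℝ)|) + |(c s₁ : ℝ) - (c s₁ : ℝ)|
            + |(c s₁ : ℝ) - (c s₂ : ℝ)|)
          + ((∑ q ∈ A, |(c s₂ : ℝ) - (c q : ℝ)|) + |(c s₂ : ℝ) - (c s₁ : ℝ)|
            + |(c s₂ : ℝ) - (c s₂ : ℝ)|) := by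
          rw [Finset.sum_congr rfl (fun p _ => step2 p), step2 s₁, step2 s₂]
      _ = _ := by
          rw [Finset.sum_add_distrib, Finset.sum_add_distrib, sub_self, abs_zero,
            sub_self, abs_zero, habs1, habs2, abs_sub_comm (c s₂ : ℝ) (c s₁ : ℝ)]
          ring
  -- expansion of the correction sum
  have e3 : (∑ i : Fin (n - j + 1),
        (|(c i : ℝ) - (c s₁ : ℝ) - (c s₂ : ℝ)|
          - |(c i : ℝ) - (c s₁ : ℝ)| - |(c i : ℝ) - (c s₂ : ℝ)|))
      = (∑ i ∈ A, |(c i : ℝ) - ((c s₁ : ℝ) + (c s₂ : ℝ))|)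
        - (∑ i ∈ A, |(c i : ℝ) - (c s₁ : ℝ)|)
        - (∑ i ∈ A, |(c i : ℝ) - (c s₂ : ℝ)|)
        + ((c s₂ : ℝ) - |(c s₁ : ℝ) - (c s₂ : ℝ)|)
        + ((c s₁ : ℝ) - |(c s₁ : ℝ) - (c s₂ : ℝ)|) := by
    have hx1 : |(c s₁ : ℝ) - (c s₁ : ℝ) - (c s₂ : ℝ)| = (c s₂ : ℝ) := by
      rw [show (c s₁ : ℝ) - (c s₁ : ℝ) - (c s₂ : ℝ) = -(c s₂ : ℝ) by ring, abs_neg,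
        abs_of_nonneg (by positivity)]
    have hx2 : |(c s₂ : ℝ) - (c s₁ : ℝ) - (c s₂ : ℝ)| = (c s₁ : ℝ) := by
      rw [show (c s₂ : ℝ) - (c s₁ : ℝ) - (c s₂ : ℝ) = -(c s₁ : ℝ) by ring, abs_neg,
        abs_of_nonneg (by positivity)]
    have hsub : ∀ i : Fin (n - j + 1),
        |(c i : ℝ) - (c s₁ : ℝ) - (c s₂ : ℝ)| = |(c i : ℝ) - ((c s₁ : ℝ) + (c s₂ : ℝ))| := by
      intro i; rw [sub_sub]
    calc (∑ i : Fin (n - j + 1),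
          (|(c i : ℝ) - (c s₁ : ℝ) - (c s₂ : ℝ)|
            - |(c i : ℝ) - (c s₁ : ℝ)| - |(c i : ℝ) - (c s₂ : ℝ)|))
        = (∑ i ∈ A,
          (|(c i : ℝ) - (c s₁ : ℝ) - (c s₂ : ℝ)|
            - |(c i : ℝ) - (c s₁ : ℝ)| - |(c i : ℝ) - (c s₂ : ℝ)|))
          + (|(c s₁ : ℝ) - (c s₁ : ℝ) - (c s₂ : ℝ)|
            - |(c s₁ : ℝ) - (c s₁ : ℝ)| - |(c s₁ : ℝ) - (c s₂ : ℝ)|)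
          + (|(c s₂ : ℝ) - (c s₁ : ℝ) - (c s₂ : ℝ)|
            - |(c s₂ : ℝ) - (c s₁ : ℝ)| - |(c s₂ : ℝ) - (c s₂ : ℝ)|) :=
          L1 fun i => (|(c i : ℝ) - (c s₁ : ℝ) - (c s₂ : ℝ)|
            - |(c i : ℝ) - (c s₁ : ℝ)| - |(c i : ℝ) - (c s₂ : ℝ)|)
      _ = _ := by
          rw [Finset.sum_congr rfl (fun i _ => by rw [hsub i]),
            Finset.sum_sub_distrib, Finset.sum_sub_distrib, hx1, hx2, sub_self, abs_zero,
            sub_self, abs_zero, abs_sub_comm (c s₂ : ℝ) (c s₁ : ℝ)]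
          ring
  -- the key identity for strictly-ordered pair-sums
  have key : (∑ p : Fin (n - j), ∑ q : Fin (n - j),
        if p < q then |(c' p : ℝ) - (c' q : ℝ)| else 0)
      = (∑ p : Fin (n - j + 1), ∑ q : Fin (n - j + 1),
          if p < q then |(c p : ℝ) - (c q : ℝ)| else 0)
        + ((∑ i : Fin (n - j + 1),
            (|(c i : ℝ) - (c s₁ : ℝ) - (c s₂ : ℝ)|
              - |(c i : ℝ) - (c s₁ : ℝ)| - |(c i : ℝ) - (c s₂ : ℝ)|))
          - (c s₂ : ℝ) - (c s₁ : ℝ) + |(c s₁ : ℝ) - (c s₂ : ℝ)|) := by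
    have d1 := hdouble (n - j) c'
    have d2 := hdouble (n - j + 1) c
    rw [e1] at d1
    rw [e2] at d2
    rw [e3]
    linarith
  -- final division bookkeeping
  have hnj2 : (2 : ℝ) ≤ (n : ℝ) - (j : ℝ) := by
    have : ((n - j : ℕ) : ℝ) = (n : ℝ) - (j : ℝ) := by
      rw [Nat.cast_sub hjn]
    rw [← this]
    exact_mod_cast hK
  have hn0 : (n : ℝ) ≠ 0 := by positivity
  have hd0 : (n : ℝ) - (j : ℝ) ≠ 0 := by linarith
  have hd1 : (n : ℝ) - (j : ℝ) - 1 ≠ 0 := by linarith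
  simp only [giniN]
  rw [Nat.cast_sub hjn, Nat.cast_add, Nat.cast_sub hjn, Nat.cast_one, key]
  field_simp
  rw [add_sub_cancel_right, mul_div_assoc, div_self hd0, mul_one]
  ring
end

section
/- For positive integer cluster sizes c_1,...,c_m summing to n with m ≥ 2, the Gini index G(c) = (Σ_{p<q} |c_p - c_q|)/((m-1)n) is at most (n-m)/n, with equality when one cluster has size n-m+1 and the remaining m-1 clusters are singletons. -/
open Finset

/-- The Gini index of a length-`m` vector of cluster sizes summing to `n`:
`G(c) = (Σ_{p<q}|c_p-c_q|)/((m-1)·n)`. -/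
noncomputable def giniSizes (m n : ℕ) (c : Fin m → ℕ) : ℝ :=
  (∑ p : Fin m, ∑ q : Fin m, if p < q then |(c p : ℝ) - (c q : ℝ)| else 0) /
    (((m : ℝ) - 1) * (n : ℝ))

/-- For positive integer cluster sizes `c₁ ≥ … ≥ c_m ≥ 1` summing to `n` (`m ≥ 2`),
the Gini index is at most `(n-m)/n`, with equality at `(n-m+1, 1, …, 1)`. -/
theorem gini_le_and_eq_extreme (n m : ℕ) (hm : 2 ≤ m)
    (c : Fin m → ℕ) (hmono : Antitone c) (hpos : ∀ i, 1 ≤ c i)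
    (hsum : (∑ i, c i) = n) :
    giniSizes m n c ≤ ((n : ℝ) - (m : ℝ)) / (n : ℝ) ∧
    giniSizes m n (fun i => if i.val = 0 then n - m + 1 else 1) =
      ((n : ℝ) - (m : ℝ)) / (n : ℝ) := by
  haveI : NeZero m := ⟨by omega⟩
  have hmn : m ≤ n := by
    calc m = ∑ _i : Fin m, 1 := by simp
    _ ≤ ∑ i, c i := Finset.sum_le_sum fun i _ => hpos i
    _ = n := hsum
  have hn0 : (0:ℝ) < (n:ℝ) := by exact_mod_cast (by omega : 0 < n)
  have hm1 : (0:ℝ) < (m:ℝ) - 1 := by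
    have : (2:ℝ) ≤ m := by exact_mod_cast hm
    linarith
  have hmnR : (m:ℝ) ≤ n := by exact_mod_cast hmn
  constructor
  · -- bound part
    have key : ∀ q : Fin m,
        (∑ p : Fin m, if p < q then ((c p : ℝ) - c q) else 0) ≤
          (if (q:ℕ) = 0 then 0 else (n:ℝ) - m) := by
      intro q
      rw [← Finset.sum_filter]
      have hfilt : univ.filter (fun p => p < q) = Finset.Iio q := by
        ext p; simp
      rw [hfilt]
      by_cases hq : (q:ℕ) = 0
      · have hq0 : q = 0 := Fin.ext hq
        subst hq0
        have : Finset.Iio (0 : Fin m) = ∅ := by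
          ext p; simp [Fin.lt_def]
        simp [this]
      · rw [if_neg hq]
        have hcard : (Finset.Iio q).card = (q:ℕ) := Fin.card_Iio q
        have hsplit : (∑ p ∈ Finset.Iio q, c p) + (∑ p ∈ Finset.Ici q, c p) = n := by
          rw [← hsum]
          rw [show Finset.Iio q = univ.filter (fun p => p < q) from hfilt.symm,
            show Finset.Ici q = univ.filter (fun p => ¬ p < q) from by ext p; simp [not_lt]]
          exact Finset.sum_filter_add_sum_filter_not _ _ _
        have hlow : (m - (q:ℕ)) ≤ ∑ p ∈ Finset.Ici q, c p := by
          calc m - (q:ℕ) = (Finset.Ici q).card • 1 := by rw [Fin.card_Ici]; simp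
          _ ≤ ∑ p ∈ Finset.Ici q, c p := Finset.card_nsmul_le_sum _ _ _ fun p _ => hpos p
        have hub : (∑ p ∈ Finset.Iio q, c p) + (m - (q:ℕ)) ≤ n := by omega
        have hubR : (∑ p ∈ Finset.Iio q, (c p : ℝ)) ≤ (n:ℝ) - m + (q:ℕ) := by
          have h2 : ((∑ p ∈ Finset.Iio q, c p : ℕ) : ℝ) + ((m - (q:ℕ) : ℕ) : ℝ) ≤ (n:ℝ) := by
            exact_mod_cast hub
          have h3 : ((m - (q:ℕ) : ℕ) : ℝ) = (m:ℝ) - (q:ℕ) :=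
            Nat.cast_sub (le_of_lt q.isLt)
          rw [h3] at h2
          push_cast at h2 ⊢
          linarith
        have hcq : (1:ℝ) ≤ c q := by exact_mod_cast hpos q
        calc (∑ p ∈ Finset.Iio q, ((c p : ℝ) - c q))
            = (∑ p ∈ Finset.Iio q, (c p : ℝ)) - (q:ℕ) * (c q : ℝ) := by
              rw [Finset.sum_sub_distrib, Finset.sum_const, hcard, nsmul_eq_mul]
        _ ≤ ((n:ℝ) - m + (q:ℕ)) - (q:ℕ) * 1 := by
              have : ((q:ℕ):ℝ) * 1 ≤ (q:ℕ) * (c q : ℝ) := by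
                apply mul_le_mul_of_nonneg_left hcq (by positivity)
              linarith
        _ = (n:ℝ) - m := by ring
    have hS : (∑ p : Fin m, ∑ q : Fin m, if p < q then |(c p : ℝ) - c q| else 0)
        ≤ ((m:ℝ) - 1) * ((n:ℝ) - m) := by
      rw [Finset.sum_comm]
      have habs : ∀ q : Fin m, (∑ p : Fin m, if p < q then |(c p : ℝ) - c q| else 0)
          = ∑ p : Fin m, if p < q then ((c p : ℝ) - c q) else 0 := by
        intro q
        refine Finset.sum_congr rfl fun p _ => ?_
        split_ifs with h
        · exact abs_of_nonneg (sub_nonneg.2 (by exact_mod_cast hmono h.le))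
        · rfl
      calc (∑ q : Fin m, ∑ p : Fin m, if p < q then |(c p : ℝ) - c q| else 0)
          ≤ ∑ q : Fin m, (if (q:ℕ) = 0 then 0 else (n:ℝ) - m) := by
            refine Finset.sum_le_sum fun q _ => ?_
            rw [habs q]; exact key q
      _ = ((m:ℝ) - 1) * ((n:ℝ) - m) := by
            have : ∀ q : Fin m, (if (q:ℕ) = 0 then (0:ℝ) else (n:ℝ) - m)
                = ((n:ℝ) - m) - (if q = 0 then (n:ℝ) - m else 0) := by
              intro q
              by_cases hq : q = 0
              · subst hq; simp
              · have hq' : ¬ ((q:ℕ) = 0) := fun h => hq (Fin.ext h)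
                simp [hq, hq']
            simp_rw [this]
            rw [Finset.sum_sub_distrib, Finset.sum_const, Finset.sum_ite_eq' univ (0 : Fin m)]
            simp [card_univ]
            ring
    rw [giniSizes, show ((n:ℝ) - m) / n = (((m:ℝ)-1) * ((n:ℝ)-m)) / (((m:ℝ)-1) * n) from
      (mul_div_mul_left _ _ (ne_of_gt hm1)).symm]
    exact (div_le_div_iff_of_pos_right (by positivity)).mpr hS
  · set d : ℝ := (n:ℝ) - m with hd
    have hd0 : 0 ≤ d := by rw [hd]; linarith
    set f : Fin m → ℕ := fun i => if i.val = 0 then n - m + 1 else 1 with hf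
    have hf0 : ((f 0 : ℕ) : ℝ) = d + 1 := by
      simp only [hf, Fin.val_zero, if_pos rfl]
      push_cast [Nat.cast_sub hmn]
      rw [hd]
    have hfne : ∀ q : Fin m, q ≠ 0 → ((f q : ℕ) : ℝ) = 1 := by
      intro q hq
      have hq' : ¬ ((q:ℕ) = 0) := fun h => hq (Fin.ext h)
      simp [hf, hq', hq]
    have step : ∀ p : Fin m, (∑ q : Fin m, if p < q then |((f p : ℕ):ℝ) - (f q : ℕ)| else 0)
        = if p = 0 then ((m:ℝ) - 1) * d else 0 := by
      intro p
      by_cases hp : p = 0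
      · subst hp
        rw [if_pos rfl]
        have hterm : ∀ q : Fin m, (if (0 : Fin m) < q then |((f 0 : ℕ):ℝ) - (f q : ℕ)| else 0)
            = d - (if q = 0 then d else 0) := by
          intro q
          by_cases hq : q = 0
          · subst hq; simp
          · rw [if_pos ((Fin.pos_iff_ne_zero' q).2 hq), if_neg hq, sub_zero, hf0, hfne q hq]
            rw [show d + 1 - 1 = d from by ring, abs_of_nonneg hd0]
        simp_rw [hterm]
        rw [Finset.sum_sub_distrib, Finset.sum_const, Finset.sum_ite_eq' univ (0 : Fin m)]
        simp [card_univ]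
        ring
      · rw [if_neg hp]
        refine Finset.sum_eq_zero fun q _ => ?_
        split_ifs with h
        · have hq : q ≠ 0 := by
            rintro rfl
            exact absurd h (not_lt.2 (Fin.zero_le p))
          rw [hfne p hp, hfne q hq]
          simp
        · rfl
    have hnum : (∑ p : Fin m, ∑ q : Fin m, if p < q then |((f p : ℕ):ℝ) - (f q : ℕ)| else 0)
        = ((m:ℝ) - 1) * d := by
      simp_rw [step]
      rw [Finset.sum_ite_eq' univ (0 : Fin m)]
      simp
    rw [giniSizes]
    rw [hnum, mul_div_mul_left _ _ (ne_of_gt hm1), hd]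
end
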